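/- Let X, Y, Z be smooth finite-dimensional real manifolds without boundary, let z₀ ∈ Z, let C ⊆ Y be a compact set, and let f : X × Y → Z be a continuously differentiable (C¹) map. For y ∈ Y write f_y : X → Z for the map x ↦ f(x, y). Assume that for each y ∈ C there exists x ∈ X with f(x, y) = z₀ such that the differential of f_y at x is a surjective linear map of tangent spaces. Then there exists an open set V ⊆ Z with z₀ ∈ V such that V ⊆ f_y(X) for every y ∈ C. -/

import Mathlib

open scoped Manifold
open Filter Set Topology

lemma core_map_nhds {E F H H' : Type*} [NormedAddCommGroup E] [NormedSpace ℝ E] [CompleteSpace E]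
    [NormedAddCommGroup F] [NormedSpace ℝ F] [CompleteSpace F]
    [TopologicalSpace H] [TopologicalSpace H']
    {I : ModelWithCorners ℝ E H} [I.Boundaryless]
    {J : ModelWithCorners ℝ F H'} [J.Boundaryless]
    {M : Type*} [TopologicalSpace M] [ChartedSpace H M] [IsManifold I (⊤ : ℕ∞) M]
    {N : Type*} [TopologicalSpace N] [ChartedSpace H' N] [IsManifold J (⊤ : ℕ∞) N]
    {f : M → N} {p : M} (hf : ContMDiffAt I J 1 f p)
    (hs : Function.Surjective (mfderiv I J f p)) :
    Filter.map f (𝓝 p) = 𝓝 (f p) := by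
  set φ := extChartAt I p with hφ
  set ψ := extChartAt J (f p) with hψ
  set G : E → F := ψ ∘ f ∘ φ.symm with hG
  have hmd : MDifferentiableAt I J f p := hf.mdifferentiableAt one_ne_zero
  have hcont : ContinuousAt f p := hf.continuousAt
  have hrI : range I = univ := ModelWithCorners.Boundaryless.range_eq_univ
  -- G is C¹ at φ p
  have hGc : ContDiffAt ℝ 1 G (φ p) := by
    have := (contMDiffAt_iff.1 hf).2
    rw [hrI, contDiffWithinAt_univ] at this
    simpa [hG, hφ, hψ] using this
  -- mfderiv equals fderiv of G
  have hder : (mfderiv I J f p : E →L[ℝ] F) = fderiv ℝ G (φ p) := by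
    rw [hmd.mfderiv]
    simp [writtenInExtChartAt, hrI, fderivWithin_univ, hG, hφ, hψ]
    rfl
  have hstrict : HasStrictFDerivAt G (fderiv ℝ G (φ p)) (φ p) :=
    hGc.hasStrictFDerivAt one_ne_zero
  have hrange : LinearMap.range (fderiv ℝ G (φ p) : E →ₗ[ℝ] F) = ⊤ := by
    rw [LinearMap.range_eq_top]; rw [← hder]; exact hs
  have hmap : Filter.map G (𝓝 (φ p)) = 𝓝 (G (φ p)) :=
    hstrict.map_nhds_eq_of_surj hrange
  -- f eventually equals ψ.symm ∘ G ∘ φ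
  have h1 : ∀ᶠ x in 𝓝 p, x ∈ φ.source := extChartAt_source_mem_nhds p
  have h2 : ∀ᶠ x in 𝓝 p, f x ∈ ψ.source := hcont (extChartAt_source_mem_nhds (f p))
  have heq : f =ᶠ[𝓝 p] (ψ.symm ∘ G ∘ φ) := by
    filter_upwards [h1, h2] with x hx hfx
    simp only [Function.comp, hG]
    rw [φ.left_inv hx, ψ.left_inv hfx]
  have hGφp : G (φ p) = ψ (f p) := by
    simp only [hG, Function.comp]
    rw [φ.left_inv (mem_extChartAt_source p)]
  have hψsymm : Filter.map ψ.symm (𝓝 (ψ (f p))) = 𝓝 (f p) := by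
    have hψψ : (ψ.symm ∘ ψ) =ᶠ[𝓝 (f p)] id := by
      filter_upwards [extChartAt_source_mem_nhds (I := J) (f p)] with x hx
      exact ψ.left_inv hx
    rw [← map_extChartAt_nhds_of_boundaryless (f p), ← hψ, Filter.map_map,
      Filter.map_congr hψψ, Filter.map_id]
  calc Filter.map f (𝓝 p) = Filter.map (ψ.symm ∘ G ∘ φ) (𝓝 p) := Filter.map_congr heq
    _ = Filter.map ψ.symm (Filter.map G (Filter.map φ (𝓝 p))) := by
        rw [Filter.map_map, Filter.map_map]; rfl
    _ = 𝓝 (f p) := by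
        rw [show Filter.map φ (𝓝 p) = 𝓝 (φ p) from map_extChartAt_nhds_of_boundaryless p,
          hmap, hGφp, hψsymm]

/-- Corollary 3.6 (real case): let `f : X × Y → Z` be a `C¹` map of smooth real manifolds
without boundary, `z₀ ∈ Z`, and `C ⊆ Y` compact. If for every `y ∈ C` there is `x ∈ X`
with `f(x, y) = z₀` at which the differential of `f_y` is surjective, then there is an open
set `V ∋ z₀` with `V ⊆ f_y(X)` for every `y ∈ C`. -/
theorem exists_open_uniformly_surjective_of_compact
    {EX : Type*} [NormedAddCommGroup EX] [NormedSpace ℝ EX] [FiniteDimensional ℝ EX]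
    {EY : Type*} [NormedAddCommGroup EY] [NormedSpace ℝ EY] [FiniteDimensional ℝ EY]
    {EZ : Type*} [NormedAddCommGroup EZ] [NormedSpace ℝ EZ] [FiniteDimensional ℝ EZ]
    (X : Type*) [TopologicalSpace X] [ChartedSpace EX X]
    [IsManifold (𝓘(ℝ, EX)) (⊤ : ℕ∞) X]
    (Y : Type*) [TopologicalSpace Y] [ChartedSpace EY Y]
    [IsManifold (𝓘(ℝ, EY)) (⊤ : ℕ∞) Y]
    (Z : Type*) [TopologicalSpace Z] [ChartedSpace EZ Z]
    [IsManifold (𝓘(ℝ, EZ)) (⊤ : ℕ∞) Z]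
    (z₀ : Z) (C : Set Y) (hC : IsCompact C)
    (f : X × Y → Z)
    (hf : ContMDiff ((𝓘(ℝ, EX)).prod (𝓘(ℝ, EY))) (𝓘(ℝ, EZ)) 1 f)
    (hpt : ∀ y ∈ C, ∃ x : X, f (x, y) = z₀ ∧
      Function.Surjective (mfderiv (𝓘(ℝ, EX)) (𝓘(ℝ, EZ)) (fun x' => f (x', y)) x)) :
    ∃ V : Set Z, IsOpen V ∧ z₀ ∈ V ∧ ∀ y ∈ C, V ⊆ Set.range (fun x => f (x, y)) := by
  have key : ∀ y₀ ∈ C, ∃ (U : Set Y) (V : Set Z), IsOpen U ∧ y₀ ∈ U ∧ IsOpen V ∧ z₀ ∈ V ∧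
      ∀ y ∈ U, V ⊆ Set.range (fun x => f (x, y)) := by
    intro y₀ hy₀
    obtain ⟨x₀, hfx₀, hsurj⟩ := hpt y₀ hy₀
    set g : X × Y → Z × Y := fun p => (f p, p.2) with hg
    have hgC : ContMDiffAt ((𝓘(ℝ, EX)).prod (𝓘(ℝ, EY))) ((𝓘(ℝ, EZ)).prod (𝓘(ℝ, EY))) 1 g
        (x₀, y₀) := (hf.contMDiffAt).prodMk contMDiff_snd.contMDiffAt
    have hmdf : MDifferentiableAt ((𝓘(ℝ, EX)).prod (𝓘(ℝ, EY))) (𝓘(ℝ, EZ)) f (x₀, y₀) :=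
      (hf.mdifferentiable one_ne_zero) (x₀, y₀)
    set Df := mfderiv ((𝓘(ℝ, EX)).prod (𝓘(ℝ, EY))) (𝓘(ℝ, EZ)) f (x₀, y₀) with hDf
    have hDg : mfderiv ((𝓘(ℝ, EX)).prod (𝓘(ℝ, EY))) ((𝓘(ℝ, EZ)).prod (𝓘(ℝ, EY))) g (x₀, y₀)
        = Df.prod (mfderiv ((𝓘(ℝ, EX)).prod (𝓘(ℝ, EY))) (𝓘(ℝ, EY)) Prod.snd (x₀, y₀)) :=
      hmdf.mfderiv_prod mdifferentiableAt_snd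
    have hpart : mfderiv (𝓘(ℝ, EX)) (𝓘(ℝ, EZ)) (fun x' => f (x', y₀)) x₀
        = Df.comp (ContinuousLinearMap.inl ℝ EX EY) := by
      have h0 : (fun x' => f (x', y₀)) = f ∘ (fun x => (x, y₀)) := rfl
      have h' : MDifferentiableAt (𝓘(ℝ, EX)) ((𝓘(ℝ, EX)).prod (𝓘(ℝ, EY)))
          (fun x => (x, y₀)) x₀ := mdifferentiableAt_id.prodMk mdifferentiableAt_const
      rw [h0, mfderiv_comp x₀ hmdf h', mfderiv_prod_left, hDf]; rfl
    have hsg : Function.Surjective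
        (mfderiv ((𝓘(ℝ, EX)).prod (𝓘(ℝ, EY))) ((𝓘(ℝ, EZ)).prod (𝓘(ℝ, EY))) g (x₀, y₀)) := by
      rw [hDg, mfderiv_snd]
      rintro ⟨w, v⟩
      obtain ⟨u, hu⟩ := hsurj ((show TangentSpace (𝓘(ℝ, EZ)) (f (x₀, y₀)) from w) - Df (0, v))
      rw [hpart] at hu
      refine ⟨(u, v), ?_⟩
      replace hu : Df (u, 0) = (show TangentSpace (𝓘(ℝ, EZ)) (f (x₀, y₀)) from w) - Df (0, v) := hu
      have hsum : Df (u, 0) + Df (0, v) = w := by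
        rw [hu]; exact sub_add_cancel _ _
      have h2 : Df (u, v) = w := by
        have hadd := Df.map_add ((u, 0) : EX × EY) (0, v)
        rw [← hsum, ← hadd]
        congr 1
        exact Prod.ext (add_zero u).symm (zero_add v).symm
      exact Prod.ext h2 rfl
    have hmapg : Filter.map g (𝓝 (x₀, y₀)) = 𝓝 (z₀, y₀) := by
      have := core_map_nhds hgC hsg
      rwa [show g (x₀, y₀) = (z₀, y₀) by simp [hg, hfx₀]] at this
    have hrg : Set.range g ∈ 𝓝 (z₀, y₀) := by
      rw [← hmapg]; exact Filter.range_mem_map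
    rw [mem_nhds_prod_iff] at hrg
    obtain ⟨V, hV, U, hU, hVU⟩ := hrg
    obtain ⟨V', hV'V, hV'o, hzV'⟩ := mem_nhds_iff.1 hV
    obtain ⟨U', hU'U, hU'o, hyU'⟩ := mem_nhds_iff.1 hU
    refine ⟨U', V', hU'o, hyU', hV'o, hzV', fun y hy z hz => ?_⟩
    obtain ⟨⟨x, y'⟩, hxy⟩ := hVU (Set.mk_mem_prod (hV'V hz) (hU'U hy))
    have hy' : y' = y := congrArg Prod.snd hxy
    exact ⟨x, by rw [← hy']; exact congrArg Prod.fst hxy⟩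
  choose U V hUo hyU hVo hzV hsub using key
  obtain ⟨t, hcov⟩ := hC.elim_nhds_subcover' (fun y hy => U y hy)
    (fun y hy => (hUo y hy).mem_nhds (hyU y hy))
  refine ⟨⋂ x ∈ t, V x.1 x.2, isOpen_biInter_finset (fun x _ => hVo x.1 x.2),
    Set.mem_iInter₂.2 fun x _ => hzV x.1 x.2, fun y hy => ?_⟩
  obtain ⟨x, hxt, hyx⟩ := Set.mem_iUnion₂.1 (hcov hy)
  exact (Set.biInter_subset_of_mem hxt).trans (hsub x.1 x.2 y hyx)
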